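/- Let Λ be an A↛B semicausal channel on the bipartite system A × B. Define the reduced map Λ_B on B-indexed matrices by Λ_B[σ] = Tr_A(Λ[(I_A/|A|) ⊗ σ]). Then Λ_B is a channel on B, and for every state ρ on A × B one has Tr_A(Λ[ρ]) = Λ_B[Tr_A(ρ)]; in particular the B-marginal of the output depends only on the B-marginal of the input, and the definition of Λ_B does not depend on the choice of the A-factor (I_A/|A| may be replaced by any state on A). -/

import Mathlib

open Matrix BigOperators
open scoped Kronecker ComplexOrder

noncomputable section

/-- Partial trace over the `A` factor. -/
def trA {A B : Type*} [Fintype A] (ρ : Matrix (A × B) (A × B) ℂ) : Matrix B B ℂ :=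
  Matrix.of fun b b' => ∑ a, ρ (a, b) (a, b')

/-- Partial trace over the `B` factor. -/
def trB {A B : Type*} [Fintype B] (ρ : Matrix (A × B) (A × B) ℂ) : Matrix A A ℂ :=
  Matrix.of fun a a' => ∑ b, ρ (a, b) (a', b)

/-- A state: positive semidefinite matrix of trace 1. -/
def IsState {n : Type*} [Fintype n] (ρ : Matrix n n ℂ) : Prop :=
  ρ.PosSemidef ∧ ρ.trace = 1

/-- A channel: a map admitting a Kraus representation `Λ[X] = ∑ i, K i * X * (K i)ᴴ`
with `∑ i, (K i)ᴴ * K i = 1` (completely positive and trace-preserving). -/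
def IsChannel {n : Type*} [Fintype n] [DecidableEq n]
    (Λ : Matrix n n ℂ → Matrix n n ℂ) : Prop :=
  ∃ (m : ℕ) (K : Fin m → Matrix n n ℂ),
    (∀ X, Λ X = ∑ i, K i * X * (K i)ᴴ) ∧ (∑ i, (K i)ᴴ * K i = 1)

/-- The induced map `Γ ⊗ id` on the bipartite system, acting blockwise. -/
def tensIdA {A B : Type*} (Γ : Matrix A A ℂ → Matrix A A ℂ)
    (ρ : Matrix (A × B) (A × B) ℂ) : Matrix (A × B) (A × B) ℂ :=
  Matrix.of fun p q => Γ (Matrix.of fun a a' => ρ (a, p.2) (a', q.2)) p.1 q.1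

/-- The induced map `id ⊗ Γ` on the bipartite system, acting blockwise. -/
def tensIdB {A B : Type*} (Γ : Matrix B B ℂ → Matrix B B ℂ)
    (ρ : Matrix (A × B) (A × B) ℂ) : Matrix (A × B) (A × B) ℂ :=
  Matrix.of fun p q => Γ (Matrix.of fun b b' => ρ (p.1, b) (q.1, b')) p.2 q.2

/-- `Λ` is A↛B semicausal: no channel applied by Alice beforehand affects Bob's
reduced output state. -/
def SemicausalAtoB {A B : Type*} [Fintype A] [Fintype B] [DecidableEq A]
    (Λ : Matrix (A × B) (A × B) ℂ → Matrix (A × B) (A × B) ℂ) : Prop :=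
  ∀ ρ : Matrix (A × B) (A × B) ℂ, IsState ρ →
    ∀ Γ : Matrix A A ℂ → Matrix A A ℂ, IsChannel Γ →
      trA (Λ (tensIdA Γ ρ)) = trA (Λ ρ)

/-- `Λ` is A↚B semicausal: no channel applied by Bob beforehand affects Alice's
reduced output state. -/
def SemicausalBtoA {A B : Type*} [Fintype A] [Fintype B] [DecidableEq B]
    (Λ : Matrix (A × B) (A × B) ℂ → Matrix (A × B) (A × B) ℂ) : Prop :=
  ∀ ρ : Matrix (A × B) (A × B) ℂ, IsState ρ →
    ∀ Γ : Matrix B B ℂ → Matrix B B ℂ, IsChannel Γ →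
      trB (Λ (tensIdB Γ ρ)) = trB (Λ ρ)

/-- `Λ` is causal: both A↛B and A↚B semicausal. -/
def Causal {A B : Type*} [Fintype A] [Fintype B] [DecidableEq A] [DecidableEq B]
    (Λ : Matrix (A × B) (A × B) ℂ → Matrix (A × B) (A × B) ℂ) : Prop :=
  SemicausalAtoB Λ ∧ SemicausalBtoA Λ

/-- The reduced map of `Λ` on `B`: `Λ_B[σ] = Tr_A(Λ[(I_A/|A|) ⊗ σ])`. -/
def redB {A B : Type*} [Fintype A] [Fintype B] [DecidableEq A]
    (Λ : Matrix (A × B) (A × B) ℂ → Matrix (A × B) (A × B) ℂ)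
    (σ : Matrix B B ℂ) : Matrix B B ℂ :=
  trA (Λ ((((Fintype.card A : ℂ))⁻¹ • (1 : Matrix A A ℂ)) ⊗ₖ σ))

-- aux lemmas
lemma kron_posSemidef {A B : Type*} [Fintype A] [Fintype B] [DecidableEq A] [DecidableEq B]
    {τ : Matrix A A ℂ} {σ : Matrix B B ℂ} (hτ : τ.PosSemidef) (hσ : σ.PosSemidef) :
    (τ ⊗ₖ σ).PosSemidef := by
  obtain ⟨P, rfl⟩ : ∃ P : Matrix A A ℂ, τ = Pᴴ * P :=
    by open scoped MatrixOrder Matrix.Norms.L2Operator in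
      exact CStarAlgebra.nonneg_iff_eq_star_mul_self.mp hτ.nonneg
  obtain ⟨Q, rfl⟩ : ∃ Q : Matrix B B ℂ, σ = Qᴴ * Q :=
    by open scoped MatrixOrder Matrix.Norms.L2Operator in
      exact CStarAlgebra.nonneg_iff_eq_star_mul_self.mp hσ.nonneg
  rw [Matrix.mul_kronecker_mul]
  have : Pᴴ ⊗ₖ Qᴴ = (P ⊗ₖ Q)ᴴ := by
    ext ⟨a,b⟩ ⟨a',b'⟩
    simp [Matrix.kronecker_apply, Matrix.conjTranspose_apply]
  rw [this]
  exact Matrix.posSemidef_conjTranspose_mul_self _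

lemma trA_kron {A B : Type*} [Fintype A] [Fintype B] (τ : Matrix A A ℂ) (σ : Matrix B B ℂ) :
    trA (τ ⊗ₖ σ) = τ.trace • σ := by
  ext b b'
  simp [trA, Matrix.kronecker_apply, Matrix.trace, Matrix.diag, Finset.sum_mul]

lemma depol_channel {A : Type*} [Fintype A] [DecidableEq A] [Nonempty A] :
    IsChannel (fun X : Matrix A A ℂ => X.trace • (((Fintype.card A : ℂ))⁻¹ • (1 : Matrix A A ℂ))) := by
  classical
  set n := Fintype.card A with hn
  have hn0 : 0 < n := Fintype.card_pos
  set c : ℂ := ((Real.sqrt n : ℝ) : ℂ)⁻¹ with hc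
  have hcsq : c * c = (n : ℂ)⁻¹ := by
    rw [hc, ← mul_inv]
    norm_cast
    rw [Real.mul_self_sqrt (by positivity)]; simp
  have hcr : (starRingEnd ℂ) c = c := by
    rw [hc]; simp
  set e := (Fintype.equivFin (A × A)).symm with he
  refine ⟨Fintype.card (A × A), fun j => c • single (e j).1 (e j).2 1, ?_, ?_⟩
  · intro X
    rw [e.sum_comp (fun p => (c • single p.1 p.2 1) * X * (c • single p.1 p.2 1)ᴴ)]
    ext i j
    simp only [Matrix.sum_apply, Fintype.sum_prod_type, Matrix.smul_apply, Matrix.mul_apply,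
      Matrix.conjTranspose_apply, Matrix.single, Matrix.one_apply, Matrix.smul_apply,
      Matrix.of_apply, Matrix.trace, Matrix.diag, _root_.map_mul, hcr]
    simp only [smul_eq_mul, mul_ite, ite_mul, one_mul, mul_one, zero_mul, mul_zero,
      Finset.sum_ite_eq, Finset.sum_ite_eq', Finset.mem_univ, if_true, apply_ite (starRingEnd ℂ), map_zero, _root_.map_one,
      Finset.sum_ite_irrel, Finset.sum_const_zero]
    simp only [ite_and, RCLike.star_def, hcr, mul_ite, ite_mul, mul_zero, zero_mul,
      Finset.sum_ite_irrel, Finset.sum_const_zero, Finset.sum_ite_eq, Finset.sum_ite_eq', Finset.mem_univ, if_true]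
    by_cases h : i = j
    · subst h
      simp only [if_true, apply_ite (starRingEnd ℂ), hcr, map_zero, mul_ite, mul_zero,
        Finset.sum_ite_eq, Finset.mem_univ]
      rw [Finset.sum_mul]
      exact Finset.sum_congr rfl fun x _ => by rw [← hcsq]; ring
    · simp [h]
  · rw [e.sum_comp (fun p => (c • single p.1 p.2 1)ᴴ * (c • single p.1 p.2 1))]
    ext i j
    simp only [Matrix.sum_apply, Fintype.sum_prod_type, Matrix.smul_apply, Matrix.mul_apply,
      Matrix.conjTranspose_apply, Matrix.single, Matrix.one_apply, Matrix.smul_apply,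
      Matrix.of_apply, _root_.map_mul, hcr]
    simp only [smul_eq_mul, mul_ite, ite_mul, one_mul, mul_one, zero_mul, mul_zero,
      Finset.sum_ite_eq, Finset.sum_ite_eq', Finset.mem_univ, if_true, apply_ite (starRingEnd ℂ), map_zero, _root_.map_one,
      Finset.sum_ite_irrel, Finset.sum_const_zero]
    simp only [ite_and, RCLike.star_def, hcr, mul_ite, ite_mul, mul_zero, zero_mul,
      Finset.sum_ite_irrel, Finset.sum_const_zero, Finset.sum_ite_eq, Finset.sum_ite_eq', Finset.mem_univ, if_true]
    by_cases h : i = j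
    · subst h
      simp only [if_true, hcr, Finset.sum_const, Finset.card_univ, ← hn, nsmul_eq_mul, hcsq]
      exact mul_inv_cancel₀ (Nat.cast_ne_zero.mpr hn0.ne')
    · simp [h, Ne.symm h]

lemma tensIdA_depol {A B : Type*} [Fintype A] [Fintype B] [DecidableEq A]
    (ρ : Matrix (A × B) (A × B) ℂ) :
    tensIdA (fun X : Matrix A A ℂ => X.trace • (((Fintype.card A : ℂ))⁻¹ • (1 : Matrix A A ℂ))) ρ
      = (((Fintype.card A : ℂ))⁻¹ • (1 : Matrix A A ℂ)) ⊗ₖ trA ρ := by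
  ext ⟨a, b⟩ ⟨a', b'⟩
  simp only [tensIdA, trA, Matrix.of_apply, Matrix.smul_apply, Matrix.kronecker_apply,
    Matrix.trace, Matrix.diag, Matrix.one_apply, smul_eq_mul, mul_ite, mul_one, mul_zero]
  by_cases h : a = a' <;> simp [h] <;> ring

lemma marginal_eq {A B : Type*} [Fintype A] [Fintype B] [DecidableEq A] [DecidableEq B]
    [Nonempty A] [Nonempty B]
    (Λ : Matrix (A × B) (A × B) ℂ → Matrix (A × B) (A × B) ℂ)
    (hsc : SemicausalAtoB Λ) (ρ : Matrix (A × B) (A × B) ℂ) (hρ : IsState ρ) :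
    trA (Λ ρ) = redB Λ (trA ρ) := by
  have h := hsc ρ hρ _ depol_channel
  rw [tensIdA_depol] at h
  exact h.symm

lemma redB_channel {A B : Type*} [Fintype A] [Fintype B] [DecidableEq A] [DecidableEq B]
    [Nonempty A] [Nonempty B]
    (Λ : Matrix (A × B) (A × B) ℂ → Matrix (A × B) (A × B) ℂ)
    (hΛ : IsChannel Λ) : IsChannel (redB Λ) := by
  classical
  obtain ⟨m, K, hK1, hK2⟩ := hΛ
  set n := Fintype.card A with hn
  have hn0 : 0 < n := Fintype.card_pos
  set c : ℂ := ((Real.sqrt n : ℝ) : ℂ)⁻¹ with hc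
  have hcsq : c * c = (n : ℂ)⁻¹ := by
    rw [hc, ← mul_inv]
    norm_cast
    rw [Real.mul_self_sqrt (by positivity)]; simp
  have hcr : (starRingEnd ℂ) c = c := by rw [hc]; simp
  set L : Fin m × A × A → Matrix B B ℂ :=
    fun q => Matrix.of fun b β => c * K q.1 (q.2.1, b) (q.2.2, β) with hL
  set e := (Fintype.equivFin (Fin m × A × A)).symm with he
  refine ⟨Fintype.card (Fin m × A × A), fun j => L (e j), ?_, ?_⟩
  · intro σ
    rw [e.sum_comp (fun q => L q * σ * (L q)ᴴ)]
    ext b b'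
    rw [redB, hK1]
    simp only [trA, Matrix.of_apply, Matrix.sum_apply, Matrix.mul_apply,
      Matrix.conjTranspose_apply, Matrix.kroneckerMap_apply, Matrix.smul_apply, Matrix.one_apply,
      smul_eq_mul, Fintype.sum_prod_type, hL, RCLike.star_def, _root_.map_mul, hcr,
      mul_ite, mul_one, mul_zero, ite_mul, zero_mul,
      Finset.sum_ite_irrel, Finset.sum_const_zero, Finset.sum_ite_eq, Finset.sum_ite_eq',
      Finset.mem_univ, if_true]
    rw [Finset.sum_comm]
    refine Finset.sum_congr rfl fun i _ => Finset.sum_congr rfl fun a' _ =>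
      Finset.sum_congr rfl fun a _ => Finset.sum_congr rfl fun β' _ => ?_
    rw [Finset.sum_mul, Finset.sum_mul]
    refine Finset.sum_congr rfl fun β _ => ?_
    rw [← hcsq]; ring
  · rw [e.sum_comp (fun q => (L q)ᴴ * L q)]
    ext β β'
    have hK2' : ∀ a : A, ∑ i, ∑ a' : A, ∑ b : B,
        (starRingEnd ℂ) (K i (a', b) (a, β)) * K i (a', b) (a, β')
        = if β = β' then 1 else 0 := by
      intro a
      have h := congrFun (congrFun hK2 (a, β)) (a, β')
      simpa [Matrix.sum_apply, Matrix.mul_apply, Matrix.conjTranspose_apply,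
        Fintype.sum_prod_type, Matrix.one_apply, Prod.ext_iff, RCLike.star_def] using h
    simp only [Matrix.sum_apply, Matrix.mul_apply, Matrix.conjTranspose_apply, Matrix.of_apply,
      Fintype.sum_prod_type, hL, RCLike.star_def, _root_.map_mul, hcr, Matrix.one_apply]
    have key : ∀ a : A, (∑ i, ∑ a' : A, ∑ bb : B,
        c * (starRingEnd ℂ) (K i (a', bb) (a, β)) * (c * K i (a', bb) (a, β')))
        = (c * c) * (if β = β' then 1 else 0) := by
      intro a
      rw [← hK2' a, Finset.mul_sum]
      refine Finset.sum_congr rfl fun i _ => ?_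
      rw [Finset.mul_sum]
      refine Finset.sum_congr rfl fun a' _ => ?_
      rw [Finset.mul_sum]
      exact Finset.sum_congr rfl fun bb _ => by ring
    rw [show (∑ x : Fin m, ∑ x_1 : A, ∑ x_2 : A, ∑ x_3 : B,
        c * (starRingEnd ℂ) (K x (x_1, x_3) (x_2, β)) * (c * K x (x_1, x_3) (x_2, β')))
        = ∑ x_2 : A, ∑ x : Fin m, ∑ x_1 : A, ∑ x_3 : B,
        c * (starRingEnd ℂ) (K x (x_1, x_3) (x_2, β)) * (c * K x (x_1, x_3) (x_2, β')) from by
      rw [Finset.sum_congr rfl fun x _ => (Finset.sum_comm : (∑ x_1 : A, ∑ x_2 : A, ∑ x_3 : B,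
        c * (starRingEnd ℂ) (K x (x_1, x_3) (x_2, β)) * (c * K x (x_1, x_3) (x_2, β')))
        = ∑ x_2 : A, ∑ x_1 : A, ∑ x_3 : B,
        c * (starRingEnd ℂ) (K x (x_1, x_3) (x_2, β)) * (c * K x (x_1, x_3) (x_2, β')))]
      exact Finset.sum_comm]
    simp only [key, hcsq, Finset.sum_const, Finset.card_univ, ← hn, nsmul_eq_mul]
    by_cases h : β = β'
    · simp [h, mul_inv_cancel₀ (show (n:ℂ) ≠ 0 from Nat.cast_ne_zero.mpr hn0.ne')]
    · simp [h]

/-- for an A↛B semicausal channel the reduced map `Λ_B` is a channel,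
the B-marginal of the output depends only on the B-marginal of the input, and the
definition of `Λ_B` is independent of the chosen state on the A factor. -/
theorem stmt_8 {A B : Type*} [Fintype A] [Fintype B] [DecidableEq A] [DecidableEq B]
    [Nonempty A] [Nonempty B]
    (Λ : Matrix (A × B) (A × B) ℂ → Matrix (A × B) (A × B) ℂ)
    (hΛ : IsChannel Λ) (hsc : SemicausalAtoB Λ) :
    IsChannel (redB Λ) ∧
    (∀ ρ : Matrix (A × B) (A × B) ℂ, IsState ρ → trA (Λ ρ) = redB Λ (trA ρ)) ∧
    (∀ τ : Matrix A A ℂ, IsState τ → ∀ σ : Matrix B B ℂ, IsState σ →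
      trA (Λ (τ ⊗ₖ σ)) = redB Λ σ) := by
  refine ⟨redB_channel Λ hΛ, fun ρ hρ => marginal_eq Λ hsc ρ hρ, fun τ hτ σ hσ => ?_⟩
  have hstate : IsState (τ ⊗ₖ σ) := by
    refine ⟨kron_posSemidef hτ.1 hσ.1, ?_⟩
    rw [Matrix.trace_kronecker, hτ.2, hσ.2, one_mul]
  have h1 : trA (τ ⊗ₖ σ) = σ := by rw [trA_kron, hτ.2, one_smul]
  rw [marginal_eq Λ hsc _ hstate, h1]
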